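/- Consider the optimal k-medoids clustering function F. If (X,d) is (δ, 1, c₀, k)-uniquely optimal, then (X,d) is (ε, δ, k)-additive perturbation robust for all ε with ε·C(n,2) ≤ c₀; in particular for ε < 2c₀/(n(n−1)). -/
import Mathlib


open Finset

def IsDissim {X : Type*} (d : X → X → ℝ) : Prop :=
  (∀ x y, d x y = d y x) ∧ (∀ x, d x x = 0) ∧ (∀ x y, 0 ≤ d x y)

open Classical in
noncomputable def clDist {X : Type*} [Fintype X] {k l : ℕ}
    (c : X → Fin k) (c' : X → Fin l) : ℝ :=
  ((Finset.univ.filter fun p : X × X =>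
      p.1 ≠ p.2 ∧ ¬((c p.1 = c p.2) ↔ (c' p.1 = c' p.2))).card : ℝ) /
    ((Fintype.card X : ℝ) * ((Fintype.card X : ℝ) - 1))

/-- The `k`-medoids cost of a clustering `c` of `(X, d)`:
`∑ i, min_{m ∈ Cᵢ} ∑_{x ∈ Cᵢ} d(x, m)`. -/
noncomputable def kmedoidsCost {X : Type*} [Fintype X] {k : ℕ}
    (d : X → X → ℝ) (c : X → Fin k) : ℝ :=
  ∑ i : Fin k,
    sInf ((fun m => ∑ x ∈ Finset.univ.filter (fun x => c x = i), d x m) ''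
      {m : X | c m = i})

/-- Perturbing the dissimilarity by at most `ε` changes the `k`-medoids cost of a
surjective clustering by at most `ε * (n - k)`. -/
lemma cost_perturb {X : Type*} [Fintype X] {k : ℕ}
    (d d' : X → X → ℝ) (hd : IsDissim d) (hd' : IsDissim d')
    (ε : ℝ) (hp : ∀ x y, |d' x y - d x y| ≤ ε)
    (c : X → Fin k) (hc : Function.Surjective c) :
    kmedoidsCost d' c ≤ kmedoidsCost d c + ε * ((Fintype.card X : ℝ) - k) := by
  have key : ∀ i : Fin k,
      sInf ((fun m => ∑ x ∈ Finset.univ.filter (fun x => c x = i), d' x m) '' {m : X | c m = i})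
        ≤ sInf ((fun m => ∑ x ∈ Finset.univ.filter (fun x => c x = i), d x m) '' {m : X | c m = i})
          + ε * (((Finset.univ.filter (fun x => c x = i)).card : ℝ) - 1) := by
    classical
    intro i
    set S := Finset.univ.filter (fun x => c x = i) with hS
    have hfin : ((fun m => ∑ x ∈ S, d x m) '' {m : X | c m = i}).Finite := Set.toFinite _
    have hne : ((fun m => ∑ x ∈ S, d x m) '' {m : X | c m = i}).Nonempty := by
      obtain ⟨m, hm⟩ := hc i
      exact ⟨_, ⟨m, hm, rfl⟩⟩
    obtain ⟨m₀, hm₀, hmin⟩ := hne.csInf_mem hfin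
    have hmin' : ∑ x ∈ S, d x m₀ = sInf ((fun m => ∑ x ∈ S, d x m) '' {m : X | c m = i}) := hmin
    have hm₀S : m₀ ∈ S := Finset.mem_filter.2 ⟨Finset.mem_univ _, hm₀⟩
    have hstep : sInf ((fun m => ∑ x ∈ S, d' x m) '' {m : X | c m = i}) ≤ ∑ x ∈ S, d' x m₀ :=
      csInf_le (Set.Finite.bddBelow (Set.toFinite _)) ⟨m₀, hm₀, rfl⟩
    have e1 : ∑ x ∈ S, d' x m₀ = ∑ x ∈ S.erase m₀, d' x m₀ := by
      rw [← Finset.sum_erase_add S _ hm₀S, hd'.2.1 m₀, add_zero]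
    have e2 : ∑ x ∈ S, d x m₀ = ∑ x ∈ S.erase m₀, d x m₀ := by
      rw [← Finset.sum_erase_add S _ hm₀S, hd.2.1 m₀, add_zero]
    have hcard : ((S.erase m₀).card : ℝ) = (S.card : ℝ) - 1 := by
      rw [Finset.card_erase_of_mem hm₀S,
        Nat.cast_sub (Finset.card_pos.2 ⟨m₀, hm₀S⟩), Nat.cast_one]
    have hsum : ∑ x ∈ S, d' x m₀ ≤ ∑ x ∈ S, d x m₀ + ε * ((S.card : ℝ) - 1) := by
      rw [e1, e2]
      have hb : ∑ x ∈ S.erase m₀, d' x m₀ ≤ ∑ x ∈ S.erase m₀, (d x m₀ + ε) :=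
        Finset.sum_le_sum fun x _ => by
          have := abs_le.1 (hp x m₀)
          linarith [this.2]
      rw [Finset.sum_add_distrib, Finset.sum_const, nsmul_eq_mul] at hb
      rw [← hcard]
      linarith
    calc sInf ((fun m => ∑ x ∈ S, d' x m) '' {m : X | c m = i})
        ≤ ∑ x ∈ S, d' x m₀ := hstep
      _ ≤ ∑ x ∈ S, d x m₀ + ε * ((S.card : ℝ) - 1) := hsum
      _ = sInf ((fun m => ∑ x ∈ S, d x m) '' {m : X | c m = i})
            + ε * ((S.card : ℝ) - 1) := by rw [hmin']
  calc kmedoidsCost d' c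
      ≤ ∑ i : Fin k,
          (sInf ((fun m => ∑ x ∈ Finset.univ.filter (fun x => c x = i), d x m) ''
            {m : X | c m = i})
          + ε * (((Finset.univ.filter (fun x => c x = i)).card : ℝ) - 1)) :=
        Finset.sum_le_sum fun i _ => key i
    _ = kmedoidsCost d c + ε * ((Fintype.card X : ℝ) - k) := by
        rw [Finset.sum_add_distrib]
        unfold kmedoidsCost
        congr 1
        rw [← Finset.mul_sum]
        congr 1
        have hcards : ∑ i : Fin k,
            ((Finset.univ.filter (fun x => c x = i)).card : ℝ) = Fintype.card X := by
          rw [← Nat.cast_sum]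
          congr 1
          rw [← Finset.card_univ (α := X),
            Finset.card_eq_sum_card_fiberwise (fun x _ => Finset.mem_univ (c x))]
        rw [Finset.sum_sub_distrib, hcards, Finset.sum_const, Finset.card_univ,
          Fintype.card_fin, nsmul_eq_mul, mul_one]

/-- If `(X, d)` is `(δ, 1, c₀, k)`-uniquely optimal for the optimal `k`-medoids function `F`,
then `(X, d)` is `(ε, δ, k)`-additive perturbation robust for all `ε` with `ε·C(n,2) ≤ c₀`. -/
theorem kmedoids_uniquely_optimal_implies_additive_robust
    {X : Type*} [Fintype X] {k : ℕ}
    (F : (X → X → ℝ) → (X → Fin k))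
    (hF : ∀ e : X → X → ℝ, IsDissim e → Function.Surjective (F e) ∧
      ∀ c : X → Fin k, Function.Surjective c → kmedoidsCost e (F e) ≤ kmedoidsCost e c)
    (d : X → X → ℝ) (hd : IsDissim d)
    (δ c₀ : ℝ)
    (hUO : ∀ c : X → Fin k, Function.Surjective c →
      kmedoidsCost d c ≤ 1 * kmedoidsCost d (F d) + c₀ → clDist (F d) c < δ)
    (ε : ℝ) (hε : 0 < ε)
    (hεbound : ε * (Nat.choose (Fintype.card X) 2 : ℝ) ≤ c₀) :
    ∀ d' : X → X → ℝ, IsDissim d' → (∀ x y, |d' x y - d x y| ≤ ε) →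
      clDist (F d) (F d') < δ := by
  intro d' hd' hp
  obtain ⟨hsd, hod⟩ := hF d hd
  obtain ⟨hsd', hod'⟩ := hF d' hd'
  have hc₀ : 0 ≤ c₀ := le_trans (mul_nonneg hε.le (Nat.cast_nonneg _)) hεbound
  apply hUO (F d') hsd'
  rw [one_mul]
  by_cases hk : k = 1
  · subst hk
    have hEq : F d' = F d := funext fun x => Subsingleton.elim _ _
    rw [hEq]; linarith
  · have hkn : k ≤ Fintype.card X := by
      have := Fintype.card_le_of_surjective (F d) hsd
      simpa using this
    have hp' : ∀ x y, |d x y - d' x y| ≤ ε := fun x y => by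
      rw [abs_sub_comm]; exact hp x y
    have h1 := cost_perturb d' d hd' hd ε hp' (F d') hsd'
    have h2 := hod' (F d) hsd
    have h3 := cost_perturb d d' hd hd' ε hp (F d) hsd
    have hbound : 2 * (ε * ((Fintype.card X : ℝ) - k)) ≤ c₀ := by
      refine le_trans ?_ hεbound
      rw [Nat.cast_choose_two]
      rcases Nat.eq_zero_or_pos k with h0 | h1'
      · subst h0
        have hX0 : Fintype.card X = 0 := by
          by_contra h
          obtain ⟨x⟩ := Fintype.card_pos_iff.mp (Nat.pos_of_ne_zero h)
          exact (F d x).elim0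
        rw [hX0]; simp
      · have hk2 : (2:ℝ) ≤ k := by exact_mod_cast by omega
        have hnk : (k:ℝ) ≤ Fintype.card X := by exact_mod_cast hkn
        have h4 : 4 * ((Fintype.card X : ℝ) - k) ≤
            (Fintype.card X : ℝ) * ((Fintype.card X : ℝ) - 1) := by
          nlinarith [sq_nonneg ((Fintype.card X : ℝ) - 5/2)]
        nlinarith [mul_le_mul_of_nonneg_left h4 hε.le]
    linarith
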